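/- The operator T_P|_{S_P} and T_P|_{A_P} have no common eigenvalues, where S_P = {r ∈ ℝ^{2n} : r_{i+n}=r_i} and A_P = {r : r_{i+n}=-r_i}: if λ is an eigenvalue of T_P with an eigenvector in S_P and also with an eigenvector in A_P (both nonzero), a contradiction arises since the half-turn transform H_λ would have both 1 and -1 as eigenvalues while det H_λ = 1. -/
import Mathlib


theorem stmt_17 (n : ℕ) (hn : 0 < n) (α β : ℤ → ℝ)
    (hα : ∀ i, 0 < α i) (hβ : ∀ i, 0 < β i)
    (hαper : ∀ i, α (i + n) = α i) (hβper : ∀ i, β (i + n) = β i)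
    (lam : ℝ) (r s : ℤ → ℝ)
    (hrsym : ∀ i, r (i + n) = r i)
    (hsasym : ∀ i, s (i + n) = -s i)
    (hre : ∀ i, -(β i) * (α i * (r (i + 1) - r i) - α (i - 1) * (r i - r (i - 1))) = lam * r i)
    (hse : ∀ i, -(β i) * (α i * (s (i + 1) - s i) - α (i - 1) * (s i - s (i - 1))) = lam * s i)
    (hr0 : ∃ i, r i ≠ 0) (hs0 : ∃ i, s i ≠ 0) :
    False := by
  obtain ⟨i0, hri0⟩ := hr0
  have hβne : ∀ i : ℤ, (β i) ≠ 0 := fun i => (hβ i).ne'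
  have hαne : ∀ i : ℤ, (α i) ≠ 0 := fun i => (hα i).ne'
  set W : ℤ → ℝ := fun i => α i * (r i * s (i + 1) - r (i + 1) * s i) with hWdef
  -- the discrete Wronskian is constant
  have hW : ∀ i : ℤ, W (i + 1) = W i := by
    intro i
    have h1 := hre (i + 1)
    have h2 := hse (i + 1)
    rw [show i + 1 - 1 = i by ring] at h1 h2
    refine mul_left_cancel₀ (hβne (i + 1)) ?_
    show β (i+1) * (α (i+1) * (r (i+1) * s (i+1+1) - r (i+1+1) * s (i+1)))
        = β (i+1) * (α i * (r i * s (i+1) - r (i+1) * s i))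
    linear_combination (-(r (i + 1))) * h2 + s (i + 1) * h1
  have hWsteps : ∀ (j : ℤ) (k : ℕ), W (j + k) = W j := by
    intro j k
    induction k with
    | zero => simp
    | succ m ih =>
      push_cast
      rw [show j + ((m : ℤ) + 1) = (j + m) + 1 by ring, hW (j + m)]
      push_cast at ih
      exact ih
  -- the Wronskian flips sign after n steps
  have hWanti : ∀ i : ℤ, W (i + n) = -W i := by
    intro i
    show α (i + n) * (r (i + n) * s (i + n + 1) - r (i + n + 1) * s (i + n))
        = -(α i * (r i * s (i + 1) - r (i + 1) * s i))
    rw [show i + (n : ℤ) + 1 = (i + 1) + n by ring, hαper i, hrsym i, hrsym (i + 1),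
      hsasym i, hsasym (i + 1)]
    ring
  have h6 : W i0 = 0 := by
    have h5 : W (i0 + n) = W i0 := hWsteps i0 n
    have h7 := hWanti i0
    linarith [h5, h7]
  have hinner : r i0 * s (i0 + 1) - r (i0 + 1) * s i0 = 0 := by
    have h6' : α i0 * (r i0 * s (i0 + 1) - r (i0 + 1) * s i0) = 0 := h6
    exact (mul_eq_zero.mp h6').resolve_left (hαne i0)
  set u : ℤ → ℝ := fun i => s i0 * r i - r i0 * s i with hudef
  have hu0 : u i0 = 0 := by show s i0 * r i0 - r i0 * s i0 = 0; ring
  have hu1 : u (i0 + 1) = 0 := by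
    show s i0 * r (i0 + 1) - r i0 * s (i0 + 1) = 0
    linarith [hinner]
  have hue : ∀ i : ℤ, β i * (α i * (u (i + 1) - u i) - α (i - 1) * (u i - u (i - 1)))
      = -(lam * u i) := by
    intro i
    show β i * (α i * ((s i0 * r (i + 1) - r i0 * s (i + 1)) - (s i0 * r i - r i0 * s i))
        - α (i - 1) * ((s i0 * r i - r i0 * s i) - (s i0 * r (i - 1) - r i0 * s (i - 1))))
        = -(lam * (s i0 * r i - r i0 * s i))
    linear_combination (-(s i0)) * hre i + r i0 * hse i
  have hfwd : ∀ k : ℕ, u (i0 + k) = 0 ∧ u (i0 + k + 1) = 0 := by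
    intro k
    induction k with
    | zero => simpa using ⟨hu0, hu1⟩
    | succ m ih =>
      obtain ⟨h1, h2⟩ := ih
      have h := hue (i0 + m + 1)
      rw [show i0 + (m : ℤ) + 1 - 1 = i0 + m by ring] at h
      rw [h1, h2] at h
      have h' : (β (i0 + m + 1) * α (i0 + m + 1)) * u (i0 + m + 1 + 1) = 0 := by
        linear_combination h
      have hz : u (i0 + m + 1 + 1) = 0 :=
        (mul_eq_zero.mp h').resolve_left (mul_ne_zero (hβne _) (hαne _))
      constructor
      · push_cast
        rw [show i0 + ((m : ℤ) + 1) = i0 + m + 1 by ring]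
        exact h2
      · push_cast
        rw [show i0 + ((m : ℤ) + 1) + 1 = i0 + m + 1 + 1 by ring]
        exact hz
  have hbwd : ∀ k : ℕ, u (i0 - k) = 0 ∧ u (i0 - k + 1) = 0 := by
    intro k
    induction k with
    | zero => simpa using ⟨hu0, hu1⟩
    | succ m ih =>
      obtain ⟨h1, h2⟩ := ih
      have h := hue (i0 - m)
      rw [h1, h2] at h
      have h' : (β (i0 - m) * α (i0 - m - 1)) * u (i0 - m - 1) = 0 := by
        linear_combination h
      have hz : u (i0 - m - 1) = 0 :=
        (mul_eq_zero.mp h').resolve_left (mul_ne_zero (hβne _) (hαne _))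
      constructor
      · push_cast
        rw [show i0 - ((m : ℤ) + 1) = i0 - m - 1 by ring]
        exact hz
      · push_cast
        rw [show i0 - ((m : ℤ) + 1) + 1 = i0 - m by ring]
        exact h1
  have huall : ∀ i : ℤ, u i = 0 := by
    intro i
    rcases le_or_gt i0 i with h | h
    · have heq : i = i0 + ((i - i0).toNat : ℤ) := by
        rw [Int.toNat_of_nonneg (by linarith)]; ring
      rw [heq]; exact (hfwd _).1
    · have heq : i = i0 - ((i0 - i).toNat : ℤ) := by
        rw [Int.toNat_of_nonneg (by linarith)]; ring
      rw [heq]; exact (hbwd _).1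
  have hsr : ∀ i : ℤ, s i0 * r i = r i0 * s i := by
    intro i
    have h := huall i
    have h' : s i0 * r i - r i0 * s i = 0 := h
    linarith
  have hzero : ∀ i : ℤ, s i0 * r i = 0 := by
    intro i
    have h1 := hsr i
    have h2 := hsr (i + n)
    rw [hrsym i, hsasym i] at h2
    linear_combination (h1 + h2) / 2
  have hsi0 : s i0 = 0 := by
    have h := hzero i0
    exact (mul_eq_zero.mp (by linear_combination h : r i0 * s i0 = 0)).resolve_left hri0
  obtain ⟨j, hsj⟩ := hs0
  apply hsj
  have h := hsr j
  rw [hsi0] at h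
  have h' : r i0 * s j = 0 := by linarith
  exact (mul_eq_zero.mp h').resolve_left hri0
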